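/- Let α > 0 and let u ∈ C⁴([0,1/2]) satisfy the elastica equation (1/√(1+u'²)) · d/dx( κ_u'/√(1+u'²) ) + (1/2)κ_u³ = 0 on (0,1/2), where κ_u = u''/(1+u'²)^{3/2}, with initial data u(0) = 0, u'(0) = α, u''(0) = 0, u'''(0) = β_*(α), and suppose u'(1/2) = 0. Then u(1/2) = J(α)/(2 I(α)), where I(α) = ∫₀^α (√α/√(α−s)) (1+s²)^{-5/4} ds and J(α) = ∫₀^α (√α/√(α−s)) · s (1+s²)^{-5/4} ds. -/

import Mathlib

open Real MeasureTheory

/-- The curvature of the graph `(x, u x)`. -/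
noncomputable def curv (u : ℝ → ℝ) (x : ℝ) : ℝ :=
  iteratedDeriv 2 u x / (1 + deriv u x ^ 2) ^ ((3:ℝ)/2)

/-- `u` satisfies the elastica equation
`(1/√(1+u'²)) (κ_u'/√(1+u'²))' + κ_u³/2 = 0` on the set `E`. -/
def ElasticaOn (u : ℝ → ℝ) (E : Set ℝ) : Prop :=
  ∀ x ∈ E,
    (1 / Real.sqrt (1 + deriv u x ^ 2)) *
        deriv (fun y => deriv (curv u) y / Real.sqrt (1 + deriv u y ^ 2)) x
      + (1/2) * curv u x ^ 3 = 0

/-- `β_*(α) = −2(1+α²)^{5/2} (∫₀^α (α−t)^{-1/2}(1+t²)^{-5/4} dt)²`. -/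
noncomputable def βstar (α : ℝ) : ℝ :=
  -2 * (1 + α ^ 2) ^ ((5:ℝ)/2) *
    (∫ t in (0:ℝ)..α, (α - t) ^ (-(1:ℝ)/2) * (1 + t ^ 2) ^ (-(5:ℝ)/4)) ^ 2

/-- `I(α) = ∫₀^α (√α/√(α−s)) (1+s²)^{-5/4} ds`. -/
noncomputable def Ifun (α : ℝ) : ℝ :=
  ∫ s in (0:ℝ)..α, (Real.sqrt α / Real.sqrt (α - s)) * (1 + s ^ 2) ^ (-(5:ℝ)/4)

/-- `J(α) = ∫₀^α (√α/√(α−s)) · s (1+s²)^{-5/4} ds`. -/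
noncomputable def Jfun (α : ℝ) : ℝ :=
  ∫ s in (0:ℝ)..α, (Real.sqrt α / Real.sqrt (α - s)) * (s * (1 + s ^ 2) ^ (-(5:ℝ)/4))

open intervalIntegral


lemma cont_pw : Continuous (fun x : ℝ => (1 + x ^ 2) ^ (-(5:ℝ)/4)) := by
  apply Continuous.rpow_const (by continuity)
  intro x; left; positivity

variable {α : ℝ}

lemma int_base (hα : 0 < α) :
    IntervalIntegrable (fun t => (α - t) ^ (-(1:ℝ)/2)) volume 0 α := by
  have h : IntervalIntegrable (fun x : ℝ => x ^ (-(1:ℝ)/2)) volume 0 α :=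
    intervalIntegral.intervalIntegrable_rpow' (by norm_num)
  have := (h.comp_sub_left α)
  simpa using this.symm

lemma int_mul (hα : 0 < α) {g : ℝ → ℝ} (hg : Continuous g) :
    IntervalIntegrable (fun t => (α - t) ^ (-(1:ℝ)/2) * g t) volume 0 α :=
  (int_base hα).mul_continuousOn (hg.continuousOn)

lemma Bk_pos (hα : 0 < α) :
    0 < ∫ t in (0:ℝ)..α, (α - t) ^ (-(1:ℝ)/2) * (1 + t ^ 2) ^ (-(5:ℝ)/4) := by
  apply intervalIntegral.intervalIntegral_pos_of_pos_on
  · exact int_mul hα cont_pw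
  · intro x hx
    have h1 : (0:ℝ) < α - x := by linarith [hx.2]
    have h2 : (0:ℝ) < 1 + x ^ 2 := by positivity
    positivity
  · exact hα

lemma ftc_key (hα : 0 < α) :
    ∫ t in (0:ℝ)..α, (α - t) ^ (-(1:ℝ)/2) * ((1 + α * t) * (1 + t ^ 2) ^ (-(5:ℝ)/4))
      = 2 * Real.sqrt α := by
  set f' : ℝ → ℝ := fun t => (α - t) ^ (-(1:ℝ)/2) * ((1 + α * t) * (1 + t ^ 2) ^ (-(5:ℝ)/4))
    with hf'
  set H : ℝ → ℝ := fun t => -2 * Real.sqrt (α - t) * (1 + t ^ 2) ^ (-(1:ℝ)/4) with hH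
  have hcont : ContinuousOn H (Set.Icc 0 α) := by
    apply Continuous.continuousOn
    apply Continuous.mul
    · exact (continuous_const.mul ((continuous_const.sub continuous_id').sqrt))
    · apply Continuous.rpow_const (by continuity)
      intro x; left; positivity
  have hderiv : ∀ t ∈ Set.Ioo (0:ℝ) α, HasDerivAt H (f' t) t := by
    intro t ht
    have hat : (0:ℝ) < α - t := by linarith [ht.2]
    have h1t : (0:ℝ) < 1 + t ^ 2 := by positivity
    have hs : HasDerivAt (fun y : ℝ => Real.sqrt (α - y)) ((-1) / (2 * Real.sqrt (α - t))) t := by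
      have := (((hasDerivAt_id t).const_sub α)).sqrt (ne_of_gt hat)
      simpa using this
    have hp : HasDerivAt (fun y : ℝ => (1 + y ^ 2) ^ (-(1:ℝ)/4))
        ((0 + 2 * t) * (-(1:ℝ)/4) * (1 + t ^ 2) ^ (-(1:ℝ)/4 - 1)) t := by
      have hb : HasDerivAt (fun y : ℝ => 1 + y ^ 2) (0 + 2 * t) t := by
        simpa using (hasDerivAt_pow 2 t).const_add 1
      exact hb.rpow_const (Or.inl (ne_of_gt h1t))
    have := ((hs.const_mul (-2)).mul hp)
    convert this using 1
    · rfl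
    · rfl
    · rfl
    have hsq : Real.sqrt (α - t) ^ 2 = α - t := Real.sq_sqrt hat.le
    have hspos : 0 < Real.sqrt (α - t) := Real.sqrt_pos.mpr hat
    have hr1 : (α - t) ^ (-(1:ℝ)/2) = (Real.sqrt (α - t))⁻¹ := by
      rw [show (-(1:ℝ)/2) = -(1/2) by norm_num, Real.rpow_neg hat.le, Real.sqrt_eq_rpow]
    have hr2 : (1 + t ^ 2) ^ (-(1:ℝ)/4 - 1) = (1 + t ^ 2) ^ (-(5:ℝ)/4) := by
      norm_num
    have hr3 : (1 + t ^ 2) ^ (-(1:ℝ)/4) = (1 + t ^ 2) * (1 + t ^ 2) ^ (-(5:ℝ)/4) := by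
      rw [show (-(1:ℝ)/4) = 1 + (-(5:ℝ)/4) by norm_num, Real.rpow_add h1t, Real.rpow_one]
    rw [hf']
    simp only [hr1, hr2, hr3]
    field_simp
    linear_combination (-4 * t) * hsq
  have hint : IntervalIntegrable f' volume 0 α := by
    apply int_mul hα
    apply Continuous.mul (by continuity) cont_pw
  have := intervalIntegral.integral_eq_sub_of_hasDeriv_right_of_le hα.le hcont
    (fun t ht => (hderiv t ht).hasDerivWithinAt) hint
  rw [this, hH]
  simp only [sub_self, Real.sqrt_zero, mul_zero, zero_mul, sub_zero, sub_self]
  norm_num [Real.sqrt_zero]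

noncomputable def Bk (α : ℝ) : ℝ :=
  ∫ t in (0:ℝ)..α, (α - t) ^ (-(1:ℝ)/2) * (1 + t ^ 2) ^ (-(5:ℝ)/4)

noncomputable def Bj (α : ℝ) : ℝ :=
  ∫ t in (0:ℝ)..α, (α - t) ^ (-(1:ℝ)/2) * (t * (1 + t ^ 2) ^ (-(5:ℝ)/4))

lemma key_identity (hα : 0 < α) : Bk α + α * Bj α = 2 * Real.sqrt α := by
  have h1 : IntervalIntegrable (fun t => (α - t) ^ (-(1:ℝ)/2) * (1 + t ^ 2) ^ (-(5:ℝ)/4))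
      volume 0 α := int_mul hα cont_pw
  have h2 : IntervalIntegrable (fun t => (α - t) ^ (-(1:ℝ)/2) * (t * (1 + t ^ 2) ^ (-(5:ℝ)/4)))
      volume 0 α := int_mul hα (by exact continuous_id'.mul cont_pw)
  rw [← ftc_key hα, Bk, Bj, ← intervalIntegral.integral_const_mul,
    ← intervalIntegral.integral_add h1 (h2.const_mul α)]
  apply intervalIntegral.integral_congr
  intro t _
  ring

/-- `Ifun` with sqrt notation equals `√α * Bk`. -/
lemma Ifun_eq (hα : 0 < α) :
    (∫ s in (0:ℝ)..α, (Real.sqrt α / Real.sqrt (α - s)) * (1 + s ^ 2) ^ (-(5:ℝ)/4))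
      = Real.sqrt α * Bk α := by
  rw [Bk, ← intervalIntegral.integral_const_mul]
  apply intervalIntegral.integral_congr
  intro s hs
  rw [Set.uIcc_of_le hα.le] at hs
  have h1 : 0 ≤ α - s := by linarith [hs.2]
  have : (α - s) ^ (-(1:ℝ)/2) = (Real.sqrt (α - s))⁻¹ := by
    rw [show (-(1:ℝ)/2) = -(1/2) by norm_num, Real.rpow_neg h1, Real.sqrt_eq_rpow]
  simp only [this]
  ring

lemma Jfun_eq (hα : 0 < α) :
    (∫ s in (0:ℝ)..α, (Real.sqrt α / Real.sqrt (α - s)) * (s * (1 + s ^ 2) ^ (-(5:ℝ)/4)))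
      = Real.sqrt α * Bj α := by
  rw [Bj, ← intervalIntegral.integral_const_mul]
  apply intervalIntegral.integral_congr
  intro s hs
  rw [Set.uIcc_of_le hα.le] at hs
  have h1 : 0 ≤ α - s := by linarith [hs.2]
  have : (α - s) ^ (-(1:ℝ)/2) = (Real.sqrt (α - s))⁻¹ := by
    rw [show (-(1:ℝ)/2) = -(1/2) by norm_num, Real.rpow_neg h1, Real.sqrt_eq_rpow]
  simp only [this]
  ring



section ODE
variable {u : ℝ → ℝ}

lemma qpos (x : ℝ) : (0:ℝ) < 1 + deriv u x ^ 2 := by positivity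

lemma spos (x : ℝ) : (0:ℝ) < Real.sqrt (1 + deriv u x ^ 2) :=
  Real.sqrt_pos.mpr (qpos x)

lemma ssq (x : ℝ) : Real.sqrt (1 + deriv u x ^ 2) ^ 2 = 1 + deriv u x ^ 2 :=
  Real.sq_sqrt (qpos x).le

lemma hw3 (hu : ContDiff ℝ 4 u) : ContDiff ℝ 3 (deriv u) := by
  have h := ContDiff.iterate_deriv' (𝕜 := ℝ) 3 1 (f := u) (by exact_mod_cast hu)
  simpa using h

lemma hp2 (hu : ContDiff ℝ 4 u) : ContDiff ℝ 2 (iteratedDeriv 2 u) := by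
  have h := ContDiff.iterate_deriv' (𝕜 := ℝ) 2 2 (f := u) (by exact_mod_cast hu)
  rwa [iteratedDeriv_eq_iterate]

lemma hr1 (hu : ContDiff ℝ 4 u) : ContDiff ℝ 1 (iteratedDeriv 3 u) := by
  have h := ContDiff.iterate_deriv' (𝕜 := ℝ) 1 3 (f := u) (by exact_mod_cast hu)
  rwa [iteratedDeriv_eq_iterate]

lemma hder_w (hu : ContDiff ℝ 4 u) (x : ℝ) :
    HasDerivAt (deriv u) (iteratedDeriv 2 u x) x := by
  have : HasDerivAt (deriv u) (deriv (deriv u) x) x :=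
    ((hw3 hu).differentiable (by norm_num)).differentiableAt.hasDerivAt
  rwa [show deriv (deriv u) x = iteratedDeriv 2 u x by
    rw [iteratedDeriv_succ, iteratedDeriv_one]] at this

lemma hder_p (hu : ContDiff ℝ 4 u) (x : ℝ) :
    HasDerivAt (iteratedDeriv 2 u) (iteratedDeriv 3 u x) x := by
  have : HasDerivAt (iteratedDeriv 2 u) (deriv (iteratedDeriv 2 u) x) x :=
    ((hp2 hu).differentiable (by norm_num)).differentiableAt.hasDerivAt
  rwa [show deriv (iteratedDeriv 2 u) x = iteratedDeriv 3 u x by rw [← iteratedDeriv_succ]] at this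

lemma hder_q (hu : ContDiff ℝ 4 u) (x : ℝ) :
    HasDerivAt (fun y => 1 + deriv u y ^ 2) (2 * deriv u x * iteratedDeriv 2 u x) x := by
  have h := ((hder_w hu x).pow 2).const_add 1
  simpa [mul_comm, mul_assoc, mul_left_comm] using h

lemma hder_s (hu : ContDiff ℝ 4 u) (x : ℝ) :
    HasDerivAt (fun y => Real.sqrt (1 + deriv u y ^ 2))
      (deriv u x * iteratedDeriv 2 u x / Real.sqrt (1 + deriv u x ^ 2)) x := by
  have h := (hder_q hu x).sqrt (ne_of_gt (qpos x))
  convert h using 1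
  field_simp

lemma curv_eq (x : ℝ) : curv u x =
    iteratedDeriv 2 u x / ((1 + deriv u x ^ 2) * Real.sqrt (1 + deriv u x ^ 2)) := by
  rw [curv, show ((3:ℝ)/2) = 1 + 1/2 by norm_num, Real.rpow_add (qpos x), Real.rpow_one,
    ← Real.sqrt_eq_rpow]

/-- the derivative of the curvature -/
noncomputable def Dk (u : ℝ → ℝ) (x : ℝ) : ℝ :=
  iteratedDeriv 3 u x / ((1 + deriv u x ^ 2) * Real.sqrt (1 + deriv u x ^ 2))
    - 3 * deriv u x * iteratedDeriv 2 u x ^ 2 /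
        ((1 + deriv u x ^ 2) ^ 2 * Real.sqrt (1 + deriv u x ^ 2))

lemma hder_curv (hu : ContDiff ℝ 4 u) (x : ℝ) :
    HasDerivAt (curv u) (Dk u x) x := by
  have hden : HasDerivAt (fun y => (1 + deriv u y ^ 2) * Real.sqrt (1 + deriv u y ^ 2))
      (2 * deriv u x * iteratedDeriv 2 u x * Real.sqrt (1 + deriv u x ^ 2)
        + (1 + deriv u x ^ 2) *
          (deriv u x * iteratedDeriv 2 u x / Real.sqrt (1 + deriv u x ^ 2))) x :=
    (hder_q hu x).mul (hder_s hu x)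
  have hne : (1 + deriv u x ^ 2) * Real.sqrt (1 + deriv u x ^ 2) ≠ 0 :=
    ne_of_gt (mul_pos (qpos x) (spos x))
  have h := (hder_p hu x).div hden hne
  have hcv : curv u = fun y => iteratedDeriv 2 u y /
      ((1 + deriv u y ^ 2) * Real.sqrt (1 + deriv u y ^ 2)) := funext fun y => curv_eq y
  rw [hcv]
  convert h using 1
  · rfl
  · rfl
  · rfl
  rw [Dk]
  have h1 := ssq (u := u) x
  have h2 := (spos (u := u) x).ne'
  set S := Real.sqrt (1 + deriv u x ^ 2) with hS
  rw [← h1]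
  have hS2 : S ^ 2 ≠ 0 := pow_ne_zero 2 h2
  field_simp
  ring

end ODE

section ODE2
variable {u : ℝ → ℝ}

/-- `F = κ_s` expressed without square roots. -/
noncomputable def Ff (u : ℝ → ℝ) (x : ℝ) : ℝ :=
  iteratedDeriv 3 u x / (1 + deriv u x ^ 2) ^ 2
    - 3 * deriv u x * iteratedDeriv 2 u x ^ 2 / (1 + deriv u x ^ 2) ^ 3

lemma deriv_curv_eq (hu : ContDiff ℝ 4 u) : deriv (curv u) = Dk u :=
  funext fun x => (hder_curv hu x).deriv

lemma Ff_eq (hu : ContDiff ℝ 4 u) :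
    (fun y => deriv (curv u) y / Real.sqrt (1 + deriv u y ^ 2)) = Ff u := by
  funext x
  rw [deriv_curv_eq hu, Dk, Ff]
  have h1 := ssq (u := u) x
  have h2 := (spos (u := u) x).ne'
  set S := Real.sqrt (1 + deriv u x ^ 2) with hS
  rw [← h1]
  field_simp

lemma contDiff_q (hu : ContDiff ℝ 4 u) : ContDiff ℝ 3 (fun x => 1 + deriv u x ^ 2) :=
  contDiff_const.add ((hw3 hu).pow 2)

lemma contDiff_s (hu : ContDiff ℝ 4 u) :
    ContDiff ℝ 3 (fun x => Real.sqrt (1 + deriv u x ^ 2)) :=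
  (contDiff_q hu).sqrt fun x => (qpos x).ne'

lemma contDiff_curv (hu : ContDiff ℝ 4 u) : ContDiff ℝ 2 (curv u) := by
  have hcv : curv u = fun y => iteratedDeriv 2 u y /
      ((1 + deriv u y ^ 2) * Real.sqrt (1 + deriv u y ^ 2)) := funext fun y => curv_eq y
  rw [hcv]
  exact (hp2 hu).div (((contDiff_q hu).mul (contDiff_s hu)).of_le (by norm_num))
    fun x => ne_of_gt (mul_pos (qpos x) (spos x))

lemma contDiff_Ff (hu : ContDiff ℝ 4 u) : ContDiff ℝ 1 (Ff u) := by
  have hq := contDiff_q hu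
  apply ContDiff.sub
  · exact (hr1 hu).div ((hq.pow 2).of_le (by norm_num))
      fun x => by have := qpos (u := u) x; positivity
  · exact ((contDiff_const.mul ((hw3 hu).of_le (by norm_num))).mul
      (((hp2 hu).pow 2).of_le (by norm_num))).div ((hq.pow 3).of_le (by norm_num))
      fun x => by have := qpos (u := u) x; positivity

/-- first conserved quantity -/
noncomputable def c1f (u : ℝ → ℝ) (x : ℝ) : ℝ :=
  (- Ff u x * deriv u x + curv u x ^ 2 / 2) / Real.sqrt (1 + deriv u x ^ 2)

/-- second conserved quantity -/
noncomputable def c2f (u : ℝ → ℝ) (x : ℝ) : ℝ :=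
  (Ff u x + curv u x ^ 2 / 2 * deriv u x) / Real.sqrt (1 + deriv u x ^ 2)

lemma contDiff_c1f (hu : ContDiff ℝ 4 u) : ContDiff ℝ 1 (c1f u) := by
  apply ContDiff.div
  · exact ((contDiff_Ff hu).neg.mul ((hw3 hu).of_le (by norm_num))).add
      ((((contDiff_curv hu).pow 2).of_le (by norm_num)).div_const 2)
  · exact (contDiff_s hu).of_le (by norm_num)
  · exact fun x => (spos x).ne'

lemma contDiff_c2f (hu : ContDiff ℝ 4 u) : ContDiff ℝ 1 (c2f u) := by
  apply ContDiff.div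
  · exact (contDiff_Ff hu).add
      (((((contDiff_curv hu).pow 2).of_le (by norm_num)).div_const 2).mul
        ((hw3 hu).of_le (by norm_num)))
  · exact (contDiff_s hu).of_le (by norm_num)
  · exact fun x => (spos x).ne'

end ODE2
section ODE3
variable {u : ℝ → ℝ}


lemma hder_Ff (hu : ContDiff ℝ 4 u) (x : ℝ) : HasDerivAt (Ff u) (deriv (Ff u) x) x :=
  ((contDiff_Ff hu).differentiable one_ne_zero x).hasDerivAt

lemma deriv_Ff_eq (hu : ContDiff ℝ 4 u) {x : ℝ}
    (heq : ElasticaOn u (Set.Ioo 0 (1/2))) (hx : x ∈ Set.Ioo (0:ℝ) (1/2)) :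
    deriv (Ff u) x = -(1/2) * curv u x ^ 3 * Real.sqrt (1 + deriv u x ^ 2) := by
  have hE := heq x hx
  rw [Ff_eq hu] at hE
  have h2 := (spos (u := u) x).ne'
  field_simp at hE
  linarith

lemma hasDerivAt_c1f (hu : ContDiff ℝ 4 u) (x : ℝ) :
    HasDerivAt (c1f u)
      ((((-deriv (Ff u) x) * deriv u x + (-Ff u x) * iteratedDeriv 2 u x
          + (2 * curv u x ^ 1 * Dk u x) / 2) * Real.sqrt (1 + deriv u x ^ 2)
        - (- Ff u x * deriv u x + curv u x ^ 2 / 2)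
          * (deriv u x * iteratedDeriv 2 u x / Real.sqrt (1 + deriv u x ^ 2)))
        / Real.sqrt (1 + deriv u x ^ 2) ^ 2) x := by
  have hN : HasDerivAt (fun y => - Ff u y * deriv u y + curv u y ^ 2 / 2)
      ((-deriv (Ff u) x) * deriv u x + (-Ff u x) * iteratedDeriv 2 u x
        + (2 * curv u x ^ 1 * Dk u x) / 2) x :=
    (((hder_Ff hu x).neg.mul (hder_w hu x)).add
      (((hder_curv hu x).pow 2).div_const 2))
  exact hN.div (hder_s hu x) (spos x).ne'

lemma hasDerivAt_c2f (hu : ContDiff ℝ 4 u) (x : ℝ) :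
    HasDerivAt (c2f u)
      (((deriv (Ff u) x + ((2 * curv u x ^ 1 * Dk u x) / 2 * deriv u x
          + curv u x ^ 2 / 2 * iteratedDeriv 2 u x)) * Real.sqrt (1 + deriv u x ^ 2)
        - (Ff u x + curv u x ^ 2 / 2 * deriv u x)
          * (deriv u x * iteratedDeriv 2 u x / Real.sqrt (1 + deriv u x ^ 2)))
        / Real.sqrt (1 + deriv u x ^ 2) ^ 2) x := by
  have hN : HasDerivAt (fun y => Ff u y + curv u y ^ 2 / 2 * deriv u y)
      (deriv (Ff u) x + ((2 * curv u x ^ 1 * Dk u x) / 2 * deriv u x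
        + curv u x ^ 2 / 2 * iteratedDeriv 2 u x)) x :=
    (hder_Ff hu x).add ((((hder_curv hu x).pow 2).div_const 2).mul (hder_w hu x))
  exact hN.div (hder_s hu x) (spos x).ne'

lemma deriv_c1f_zero (hu : ContDiff ℝ 4 u) (heq : ElasticaOn u (Set.Ioo 0 (1/2)))
    {x : ℝ} (hx : x ∈ Set.Ioo (0:ℝ) (1/2)) : deriv (c1f u) x = 0 := by
  rw [(hasDerivAt_c1f hu x).deriv, deriv_Ff_eq hu heq hx]
  have h1 := ssq (u := u) x
  have h2 := (spos (u := u) x).ne'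
  simp only [Dk, Ff, curv_eq]
  set S := Real.sqrt (1 + deriv u x ^ 2) with hS
  rw [← h1]
  field_simp
  linear_combination (6 * iteratedDeriv 2 u x ^ 3 * deriv u x
    - 2 * iteratedDeriv 2 u x * iteratedDeriv 3 u x * S ^ 2) * h1

lemma deriv_c2f_zero (hu : ContDiff ℝ 4 u) (heq : ElasticaOn u (Set.Ioo 0 (1/2)))
    {x : ℝ} (hx : x ∈ Set.Ioo (0:ℝ) (1/2)) : deriv (c2f u) x = 0 := by
  rw [(hasDerivAt_c2f hu x).deriv, deriv_Ff_eq hu heq hx]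
  have h1 := ssq (u := u) x
  have h2 := (spos (u := u) x).ne'
  simp only [Dk, Ff, curv_eq]
  set S := Real.sqrt (1 + deriv u x ^ 2) with hS
  rw [← h1]
  field_simp
  linear_combination (iteratedDeriv 2 u x ^ 3) * h1

end ODE3
section ODE4
variable {u : ℝ → ℝ}

lemma Dk_eq_Ff_mul (x : ℝ) : Dk u x = Ff u x * Real.sqrt (1 + deriv u x ^ 2) := by
  rw [Dk, Ff]
  have h1 := ssq (u := u) x
  have h2 := (spos (u := u) x).ne'
  set S := Real.sqrt (1 + deriv u x ^ 2) with hS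
  rw [← h1]
  field_simp

lemma deriv_zero_on_Icc {f : ℝ → ℝ} (hf : ContDiff ℝ 1 f)
    (hz : ∀ x ∈ Set.Ioo (0:ℝ) (1/2), deriv f x = 0) :
    ∀ x ∈ Set.Icc (0:ℝ) (1/2), deriv f x = 0 := by
  intro x hx
  have hcl : Set.Icc (0:ℝ) (1/2) = closure (Set.Ioo (0:ℝ) (1/2)) := by
    rw [closure_Ioo (by norm_num : (0:ℝ) ≠ 1/2)]
  have hZ : IsClosed {y : ℝ | deriv f y = 0} :=
    isClosed_eq (hf.continuous_deriv le_rfl) continuous_const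
  have : closure (Set.Ioo (0:ℝ) (1/2)) ⊆ {y : ℝ | deriv f y = 0} :=
    closure_minimal (fun y hy => hz y hy) hZ
  exact this (hcl ▸ hx)

lemma const_on_Icc {f : ℝ → ℝ} (hf : ContDiff ℝ 1 f)
    (hz : ∀ x ∈ Set.Ioo (0:ℝ) (1/2), deriv f x = 0) :
    ∀ x ∈ Set.Icc (0:ℝ) (1/2), f x = f 0 := by
  have h := deriv_zero_on_Icc hf hz
  apply constant_of_has_deriv_right_zero (hf.continuous.continuousOn)
  intro x hx
  have hd : HasDerivAt f (deriv f x) x := (hf.differentiable one_ne_zero x).hasDerivAt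
  rw [h x (Set.mem_Icc_of_Ico hx)] at hd
  exact hd.hasDerivWithinAt

end ODE4
section SIGN
variable {u : ℝ → ℝ} {α b : ℝ}

lemma curv_neg_at_half (hu : ContDiff ℝ 4 u) (hα : 0 < α) (hb : 0 < b)
    (h1 : deriv u 0 = α) (hk0 : curv u 0 = 0) (hDk0 : Dk u 0 < 0)
    (hc1 : ∀ x ∈ Set.Icc (0:ℝ) (1/2), c1f u x = 2 * α * b ^ 2)
    (hc2 : ∀ x ∈ Set.Icc (0:ℝ) (1/2), c2f u x = -2 * b ^ 2) :
    curv u (1/2) < 0 := by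
  by_contra hge
  push_neg at hge
  -- local negativity near 0
  have hs := hasDerivAt_iff_tendsto_slope.mp (hder_curv hu 0)
  have hev : ∀ᶠ y in nhdsWithin (0:ℝ) {(0:ℝ)}ᶜ, slope (curv u) 0 y < 0 :=
    hs.eventually_lt_const hDk0
  have hev' : ∀ᶠ y in nhdsWithin (0:ℝ) (Set.Ioi 0), slope (curv u) 0 y < 0 :=
    hev.filter_mono (nhdsWithin_mono 0 (fun y hy => ne_of_gt hy))
  rw [eventually_nhdsWithin_iff, Metric.eventually_nhds_iff] at hev'
  obtain ⟨δ, hδpos, hδ⟩ := hev'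
  set D := min (δ/2) (1/4) with hD
  have hDpos : 0 < D := lt_min (by linarith) (by norm_num)
  have hDδ : D < δ := lt_of_le_of_lt (min_le_left _ _) (by linarith)
  have hD14 : D ≤ 1/4 := min_le_right _ _
  have hloc : ∀ y ∈ Set.Ioc (0:ℝ) D, curv u y < 0 := by
    intro y hy
    have hsl : slope (curv u) 0 y < 0 := by
      apply hδ _ hy.1
      simp only [Real.dist_eq, sub_zero, abs_of_pos hy.1]
      linarith [hy.2]
    rw [slope_def_field, hk0, sub_zero, sub_zero] at hsl
    have := mul_neg_of_neg_of_pos hsl hy.1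
    rwa [div_mul_cancel₀ _ (ne_of_gt hy.1)] at this
  -- the first non-negative point
  set T := {x : ℝ | x ∈ Set.Icc D (1/2) ∧ 0 ≤ curv u x} with hT
  have hTne : T.Nonempty := ⟨1/2, ⟨⟨by linarith, le_rfl⟩, hge⟩⟩
  have hTclosed : IsClosed T := by
    have : T = Set.Icc D (1/2) ∩ {x | 0 ≤ curv u x} := rfl
    rw [this]
    exact isClosed_Icc.inter (isClosed_le continuous_const (contDiff_curv hu).continuous)
  have hbdd : BddBelow T := ⟨D, fun x hx => hx.1.1⟩
  set x₂ := sInf T with hx₂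
  have hx₂T : x₂ ∈ T := hTclosed.csInf_mem hTne hbdd
  have hx₂pos : 0 < x₂ := lt_of_lt_of_le hDpos hx₂T.1.1
  have hlt : ∀ y ∈ Set.Ioo (0:ℝ) x₂, curv u y < 0 := by
    intro y hy
    by_cases hyD : y ≤ D
    · exact hloc y ⟨hy.1, hyD⟩
    · push_neg at hyD
      by_contra hge2
      push_neg at hge2
      have : y ∈ T := ⟨⟨hyD.le, le_trans hy.2.le hx₂T.1.2⟩, hge2⟩
      exact absurd (csInf_le hbdd this) (not_le.mpr hy.2)
  have hk₂le : curv u x₂ ≤ 0 := by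
    have htd : Filter.Tendsto (curv u) (nhdsWithin x₂ (Set.Iio x₂)) (nhds (curv u x₂)) :=
      tendsto_nhdsWithin_of_tendsto_nhds ((contDiff_curv hu).continuous.continuousAt)
    apply le_of_tendsto htd
    filter_upwards [Ioo_mem_nhdsLT_of_mem (⟨hx₂pos, le_rfl⟩ : x₂ ∈ Set.Ioc 0 x₂)]
    exact fun y hy => (hlt y hy).le
  have hk₂ : curv u x₂ = 0 := le_antisymm hk₂le hx₂T.2
  -- then deriv u x₂ = α
  have hx₂Icc : x₂ ∈ Set.Icc (0:ℝ) (1/2) := ⟨hx₂pos.le, hx₂T.1.2⟩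
  have e1 := hc1 x₂ hx₂Icc
  have e2 := hc2 x₂ hx₂Icc
  rw [c1f, hk₂] at e1
  rw [c2f, hk₂] at e2
  have hSne := (spos (u := u) x₂).ne'
  rw [div_eq_iff hSne] at e1 e2
  have hW : deriv u x₂ = α := by
    have hb2 : (0:ℝ) < 2 * b ^ 2 * Real.sqrt (1 + deriv u x₂ ^ 2) :=
      by positivity
    apply mul_left_cancel₀ (ne_of_gt hb2)
    linear_combination e1 + deriv u x₂ * e2
  -- strict decrease of deriv u on [0, x₂]
  have hanti : StrictAntiOn (deriv u) (Set.Icc 0 x₂) := by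
    apply strictAntiOn_of_deriv_neg (convex_Icc _ _) ((hw3 hu).continuous.continuousOn)
    intro y hy
    rw [interior_Icc] at hy
    rw [(hder_w hu y).deriv]
    have hky := hlt y hy
    rw [curv_eq] at hky
    have hd : 0 < (1 + deriv u y ^ 2) * Real.sqrt (1 + deriv u y ^ 2) :=
      mul_pos (qpos y) (spos y)
    by_contra hP
    push_neg at hP
    have := div_nonneg hP hd.le
    linarith
  have hcontra := hanti (Set.left_mem_Icc.mpr hx₂pos.le)
    (Set.right_mem_Icc.mpr hx₂pos.le) hx₂pos
  rw [h1, hW] at hcontra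
  exact absurd hcontra (lt_irrefl α)

end SIGN





/-- If `u ∈ C⁴` solves the elastica equation on `(0,1/2)` with shooting data
`u(0) = 0`, `u'(0) = α`, `u''(0) = 0`, `u'''(0) = β_*(α)`, and `u'(1/2) = 0`, then
`u(1/2) = J(α)/(2I(α))`. -/
theorem stmt_9 (α : ℝ) (hα : 0 < α) (u : ℝ → ℝ) (hu : ContDiff ℝ 4 u)
    (heq : ElasticaOn u (Set.Ioo 0 (1/2)))
    (h0 : u 0 = 0) (h1 : deriv u 0 = α) (h2 : iteratedDeriv 2 u 0 = 0)
    (h3 : iteratedDeriv 3 u 0 = βstar α) (hend : deriv u (1/2) = 0) :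
    u (1/2) = Jfun α / (2 * Ifun α) := by
  have hq0 : (0:ℝ) < 1 + α ^ 2 := by positivity
  have hbpos : 0 < Bk α := Bk_pos hα
  set b := Bk α with hbdef
  have hβval : βstar α = -2 * (1 + α ^ 2) ^ ((5:ℝ)/2) * b ^ 2 := rfl
  have hr52 : (1 + α ^ 2) ^ ((5:ℝ)/2) = (1 + α ^ 2) ^ 2 * Real.sqrt (1 + α ^ 2) := by
    rw [show ((5:ℝ)/2) = ((2:ℕ):ℝ) + 1/2 by norm_num, Real.rpow_add hq0, Real.rpow_natCast,
      ← Real.sqrt_eq_rpow]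
  have hsne0 : Real.sqrt (1 + α ^ 2) ≠ 0 := by positivity
  have hk0 : curv u 0 = 0 := by rw [curv_eq, h2, zero_div]
  have hFf0 : Ff u 0 = βstar α / (1 + α ^ 2) ^ 2 := by
    rw [Ff, h2, h3, h1]; ring
  have hc1f0 : c1f u 0 = 2 * α * b ^ 2 := by
    rw [c1f, hFf0, hβval, hk0, h1, hr52]
    field_simp
    ring
  have hc2f0 : c2f u 0 = -2 * b ^ 2 := by
    rw [c2f, hFf0, hβval, hk0, h1, hr52]
    field_simp
    ring
  have hc1 : ∀ x ∈ Set.Icc (0:ℝ) (1/2), c1f u x = 2 * α * b ^ 2 := fun x hx => by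
    rw [const_on_Icc (contDiff_c1f hu) (fun y hy => deriv_c1f_zero hu heq hy) x hx, hc1f0]
  have hc2 : ∀ x ∈ Set.Icc (0:ℝ) (1/2), c2f u x = -2 * b ^ 2 := fun x hx => by
    rw [const_on_Icc (contDiff_c2f hu) (fun y hy => deriv_c2f_zero hu heq hy) x hx, hc2f0]
  have hβneg : βstar α < 0 := by
    rw [hβval]
    have h' := Real.rpow_pos_of_pos hq0 ((5:ℝ)/2)
    have hb2 : (0:ℝ) < b ^ 2 := by positivity
    nlinarith
  have hDk0 : Dk u 0 < 0 := by
    rw [Dk, h2, h1, h3]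
    have hpos : (0:ℝ) < (1 + α ^ 2) * Real.sqrt (1 + α ^ 2) := by positivity
    have h' : (3:ℝ) * α * 0 ^ 2 / ((1 + α ^ 2) ^ 2 * Real.sqrt (1 + α ^ 2)) = 0 := by
      norm_num
    rw [h', sub_zero]
    exact div_neg_of_neg_of_pos hβneg hpos
  have hkh : curv u (1/2) < 0 := curv_neg_at_half hu hα hbpos h1 hk0 hDk0 hc1 hc2
  have hmem12 : (1/2 : ℝ) ∈ Set.Icc (0:ℝ) (1/2) := by norm_num
  have hs12 : Real.sqrt (1 + deriv u (1/2) ^ 2) = 1 := by rw [hend]; simp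
  have hksq : curv u (1/2) ^ 2 = 4 * α * b ^ 2 := by
    have h := hc1 _ hmem12
    rw [c1f, hs12, hend] at h
    field_simp at h
    linarith
  have hsa : (0:ℝ) < Real.sqrt α := Real.sqrt_pos.mpr hα
  have hsa2 : Real.sqrt α ^ 2 = α := Real.sq_sqrt hα.le
  have hkval : curv u (1/2) = -(2 * Real.sqrt α * b) := by
    have hpos : 0 < 2 * Real.sqrt α * b := by positivity
    have hfac : (curv u (1/2) + 2 * Real.sqrt α * b) *
        (curv u (1/2) - 2 * Real.sqrt α * b) = 0 := by
      linear_combination hksq + (-4 * b ^ 2) * hsa2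
    rcases mul_eq_zero.mp hfac with h | h
    · linarith
    · linarith
  set c1v := 2 * α * b ^ 2 with hc1v
  set c2v := -2 * b ^ 2 with hc2v
  have hc1vpos : 0 < c1v := by positivity
  set m := fun x => curv u x - c2v * x + c1v * u x with hm
  have hmcont : ContinuousOn m (Set.Icc 0 (1/2)) :=
    (((contDiff_curv hu).continuous.sub (continuous_const.mul continuous_id)).add
      (continuous_const.mul hu.continuous)).continuousOn
  have hmder : ∀ x ∈ Set.Ico (0:ℝ) (1/2), HasDerivWithinAt m 0 (Set.Ici x) x := by
    intro x hx
    have hxI : x ∈ Set.Icc (0:ℝ) (1/2) := Set.mem_Icc_of_Ico hx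
    have e1 := hc1 x hxI
    have e2 := hc2 x hxI
    have hSne := (spos (u := u) x).ne'
    have hSsq := ssq (u := u) x
    rw [c1f, div_eq_iff hSne] at e1
    rw [c2f, div_eq_iff hSne] at e2
    have hz : Dk u x - c2v + c1v * deriv u x = 0 := by
      rw [Dk_eq_Ff_mul]
      have hmul : Real.sqrt (1 + deriv u x ^ 2) *
          (Ff u x * Real.sqrt (1 + deriv u x ^ 2) - c2v + c1v * deriv u x) = 0 := by
        linear_combination (Ff u x) * hSsq + e2 + (- deriv u x) * e1
      exact (mul_eq_zero.mp hmul).resolve_left hSne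
    have hderu : HasDerivAt u (deriv u x) x :=
      ((hu.differentiable (by norm_num)) x).hasDerivAt
    have hder : HasDerivAt m (Dk u x - c2v * 1 + c1v * deriv u x) x :=
      ((hder_curv hu x).sub ((hasDerivAt_id x).const_mul c2v)).add (hderu.const_mul c1v)
    rw [mul_one] at hder
    rw [hz] at hder
    exact hder.hasDerivWithinAt
  have hm12 := constant_of_has_deriv_right_zero hmcont hmder (1/2) hmem12
  have hm0 : m 0 = 0 := by
    simp [hm, hk0, h0]
  rw [hm0] at hm12
  have hmeq : curv u (1/2) - c2v * (1/2) + c1v * u (1/2) = 0 := hm12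
  have hu12 : u (1/2) = (c2v / 2 - curv u (1/2)) / c1v := by
    field_simp
    linarith
  rw [hu12, hkval]
  rw [Jfun, Ifun, Jfun_eq hα, Ifun_eq hα]
  have hkid : b + α * Bj α = 2 * Real.sqrt α := key_identity hα
  rw [hc2v, hc1v]
  rw [div_eq_div_iff (by positivity) (by positivity)]
  linear_combination (-2 * Real.sqrt α * b ^ 2) * hkid
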